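/- Let d ≥ 1 and let Ω₁ be a nonempty bounded open subset of ℝ^d with boundary Γ = frontier(Ω₁), and let φ be the signed distance function of Γ. Then Ω₁ is a convex set if and only if φ is a convex function on ℝ^d. -/

import Mathlib

open Classical in
/-- Signed distance function of the boundary of an open set `Ω`:
negative distance to the frontier inside `Ω`, positive outside. -/
noncomputable def sdf {d : ℕ} (Ω : Set (EuclideanSpace ℝ (Fin d)))
    (x : EuclideanSpace ℝ (Fin d)) : ℝ :=
  if x ∈ Ω then -(Metric.infDist x (frontier Ω)) else Metric.infDist x (frontier Ω)

open scoped RealInnerProductSpace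

/-- A preconnected set meeting both a set and its complement meets the frontier. -/
lemma aux_frontier_cross {X : Type*} [TopologicalSpace X] {s Ω : Set X}
    (hs : IsPreconnected s) (h1 : (s ∩ Ω).Nonempty) (h2 : (s \ Ω).Nonempty) :
    (s ∩ frontier Ω).Nonempty := by
  by_contra h
  rw [Set.not_nonempty_iff_eq_empty] at h
  have hmem : ∀ x ∈ s, x ∉ frontier Ω := fun x hx hf =>
    (Set.eq_empty_iff_forall_notMem.1 h x) ⟨hx, hf⟩
  have hsub : s ⊆ interior Ω ∪ (closure Ω)ᶜ := by
    intro x hx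
    by_cases hxc : x ∈ closure Ω
    · left
      by_contra hxi
      exact hmem x hx ⟨hxc, hxi⟩
    · right; exact hxc
  have h1' : (s ∩ interior Ω).Nonempty := by
    obtain ⟨x, hxs, hxΩ⟩ := h1
    rcases hsub hxs with hx | hx
    · exact ⟨x, hxs, hx⟩
    · exact absurd (subset_closure hxΩ) hx
  have h2' : (s ∩ (closure Ω)ᶜ).Nonempty := by
    obtain ⟨x, hxs, hxΩ⟩ := h2
    rcases hsub hxs with hx | hx
    · exact absurd (interior_subset hx) hxΩ
    · exact ⟨x, hxs, hx⟩
  obtain ⟨z, _, hz1, hz2⟩ := hs (interior Ω) (closure Ω)ᶜ isOpen_interior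
    isClosed_closure.isOpen_compl hsub h1' h2'
  exact hz2 (subset_closure (interior_subset hz1))

/-- If `a ∈ Ω` and `b ∉ Ω`, then the segment from `a` to `b` meets the frontier. -/
lemma aux_seg_frontier {E : Type*} [NormedAddCommGroup E] [NormedSpace ℝ E]
    {Ω : Set E} {a b : E} (ha : a ∈ Ω) (hb : b ∉ Ω) :
    ∃ f ∈ frontier Ω, dist a f ≤ dist a b := by
  obtain ⟨f, hfs, hff⟩ := aux_frontier_cross (convex_segment a b).isPreconnected
    ⟨a, left_mem_segment ℝ a b, ha⟩ ⟨b, right_mem_segment ℝ a b, hb⟩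
  refine ⟨f, hff, ?_⟩
  have := dist_add_dist_of_mem_segment hfs
  have := dist_nonneg (x := f) (y := b)
  linarith

/-- Interior of the closure of an open convex nonempty set is the set itself. -/
lemma aux_int_closure_subset {E : Type*} [NormedAddCommGroup E] [NormedSpace ℝ E]
    {Ω : Set E} (hconv : Convex ℝ Ω) (hopen : IsOpen Ω) (hne : Ω.Nonempty) :
    interior (closure Ω) ⊆ Ω := by
  intro x hx
  obtain ⟨y, hy⟩ := hne
  by_cases hxy : x = y
  · rwa [hxy]
  obtain ⟨δ, hδ, hball⟩ := Metric.isOpen_iff.1 isOpen_interior x hx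
  have hxyn : ‖x - y‖ ≠ 0 := fun h => hxy (by
    have := norm_eq_zero.1 h; exact sub_eq_zero.1 this)
  have hxyp : (0:ℝ) < ‖x - y‖ := lt_of_le_of_ne (norm_nonneg _) (Ne.symm hxyn)
  set c : ℝ := δ / (2 * ‖x - y‖) with hc
  have hcpos : 0 < c := by positivity
  set z := x + c • (x - y) with hz
  have hzC : z ∈ closure Ω := by
    have : z ∈ Metric.ball x δ := by
      rw [Metric.mem_ball, dist_eq_norm]
      have : z - x = c • (x - y) := by rw [hz]; abel
      rw [this, norm_smul, Real.norm_eq_abs, abs_of_pos hcpos, hc]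
      rw [div_mul_eq_mul_div, mul_comm]
      rw [div_lt_iff₀ (by positivity)]
      nlinarith
    exact interior_subset (hball this)
  have hx_open : x ∈ openSegment ℝ y z := by
    have h1c : (1 : ℝ) + c ≠ 0 := by positivity
    refine ⟨c / (1 + c), 1 / (1 + c), by positivity, by positivity, ?_, ?_⟩
    · field_simp; ring
    · rw [hz]
      match_scalars <;> field_simp <;> ring
  have := hconv.openSegment_interior_closure_subset_interior
    (by rwa [hopen.interior_eq]) hzC hx_open
  rwa [hopen.interior_eq] at this

set_option maxHeartbeats 1000000 in
/-- For a nonempty bounded open set `Ω₁ ⊆ ℝ^d` (`d ≥ 1`) with signed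
distance function `φ`, `Ω₁` is convex iff `φ` is convex on `ℝ^d`. -/
theorem stmt_0 {d : ℕ} (hd : 1 ≤ d) (Ω₁ : Set (EuclideanSpace ℝ (Fin d)))
    (hne : Ω₁.Nonempty) (hbdd : Bornology.IsBounded Ω₁) (hopen : IsOpen Ω₁) :
    Convex ℝ Ω₁ ↔ ConvexOn ℝ Set.univ (sdf Ω₁) := by
  classical
  haveI : Nonempty (Fin d) := ⟨⟨0, hd⟩⟩
  haveI : Nontrivial (EuclideanSpace ℝ (Fin d)) := by
    refine ⟨0, EuclideanSpace.single ⟨0, hd⟩ (1:ℝ), fun h => ?_⟩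
    have := congrArg norm h
    rw [norm_zero, EuclideanSpace.norm_single] at this
    norm_num at this
  haveI : PreconnectedSpace (EuclideanSpace ℝ (Fin d)) :=
    ⟨(convex_univ : Convex ℝ (Set.univ : Set (EuclideanSpace ℝ (Fin d)))).isPreconnected⟩
  have hΓne : (frontier Ω₁).Nonempty := by
    rw [nonempty_frontier_iff]
    refine ⟨hne, fun h => ?_⟩
    exact NormedSpace.unbounded_univ ℝ (EuclideanSpace ℝ (Fin d)) (h ▸ hbdd)
  have hΓclosed : IsClosed (frontier Ω₁) := isClosed_frontier
  constructor
  · -- hard direction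
    intro hconv
    set Γ := frontier Ω₁ with hΓ
    set C := closure Ω₁ with hCdef
    have hCconv : Convex ℝ C := hconv.closure
    have hCne : C.Nonempty := hne.closure
    have hCclosed : IsClosed C := isClosed_closure
    obtain ⟨R, hR⟩ := isBounded_iff_forall_norm_le.1 hbdd.closure
    have hΓC : Γ ⊆ C := frontier_subset_closure
    have hΩC : Ω₁ ⊆ C := subset_closure
    have hIntC : interior C ⊆ Ω₁ := aux_int_closure_subset hconv hopen hne
    set S : EuclideanSpace ℝ (Fin d) → ℝ := fun u => sSup ((fun c => ⟪u, c⟫) '' C) with hS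
    have hbddS : ∀ u : EuclideanSpace ℝ (Fin d), BddAbove ((fun c => ⟪u, c⟫) '' C) := by
      intro u
      refine ⟨‖u‖ * R, ?_⟩
      rintro _ ⟨c, hc, rfl⟩
      calc ⟪u, c⟫ ≤ ‖u‖ * ‖c‖ := real_inner_le_norm u c
        _ ≤ ‖u‖ * R := by nlinarith [hR c hc, norm_nonneg u, norm_nonneg c]
    have hSle : ∀ u : EuclideanSpace ℝ (Fin d), ∀ c ∈ C, ⟪u, c⟫ ≤ S u := fun u c hc =>
      le_csSup (hbddS u) ⟨c, hc, rfl⟩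
    -- lower bound : every "affine slice" is below sdf
    have lower : ∀ u : EuclideanSpace ℝ (Fin d), ‖u‖ = 1 → ∀ z : EuclideanSpace ℝ (Fin d), ⟪u, z⟫ - S u ≤ sdf Ω₁ z := by
      intro u hu z
      by_cases hz : z ∈ Ω₁
      · rw [sdf, if_pos hz]
        have key : ∀ r : ℝ, 0 ≤ r → r < Metric.infDist z Γ → ⟪u, z⟫ + r ≤ S u := by
          intro r hr hrlt
          have hmem : z + r • u ∈ Ω₁ := by
            by_contra hzo
            obtain ⟨f, hf, hdist⟩ := aux_seg_frontier hz hzo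
            have h1 : Metric.infDist z Γ ≤ dist z f := Metric.infDist_le_dist_of_mem hf
            have h2 : dist z (z + r • u) = r := by
              rw [dist_eq_norm]
              simp [norm_smul, hu, abs_of_nonneg hr]
            linarith
          have := hSle u _ (hΩC hmem)
          rw [inner_add_right, real_inner_smul_right, real_inner_self_eq_norm_sq, hu] at this
          nlinarith
        have hzS : ⟪u, z⟫ ≤ S u := hSle u z (hΩC hz)
        have : Metric.infDist z Γ ≤ S u - ⟪u, z⟫ := by
          by_contra hcon
          push_neg at hcon
          have hd0 : 0 ≤ Metric.infDist z Γ := Metric.infDist_nonneg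
          have := key ((S u - ⟪u, z⟫ + Metric.infDist z Γ) / 2) (by linarith) (by linarith)
          linarith
        linarith
      · rw [sdf, if_neg hz]
        by_contra hcon
        push_neg at hcon
        obtain ⟨g, hg, hdg⟩ := (Metric.infDist_lt_iff hΓne).1 hcon
        have h1 : ⟪u, z⟫ - ⟪u, g⟫ ≤ dist z g := by
          rw [← inner_sub_right]
          calc ⟪u, z - g⟫ ≤ ‖u‖ * ‖z - g‖ := real_inner_le_norm _ _
            _ = dist z g := by rw [hu, one_mul, dist_eq_norm]
        have h2 : ⟪u, g⟫ ≤ S u := hSle u g (hΓC hg)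
        linarith
    -- upper bound : sdf is approximated from above by some affine slice
    have upper : ∀ z : EuclideanSpace ℝ (Fin d), ∀ ε : ℝ, 0 < ε → ∃ u : EuclideanSpace ℝ (Fin d), ‖u‖ = 1 ∧
        sdf Ω₁ z ≤ ⟪u, z⟫ - S u + ε := by
      intro z ε hε
      by_cases hzC : z ∈ C
      · -- pick a point g on the frontier almost realizing infDist, and w outside C near g
        have : Metric.infDist z Γ < Metric.infDist z Γ + ε / 4 := by linarith
        obtain ⟨g, hg, hdg⟩ := (Metric.infDist_lt_iff hΓne).1 this
        have hgC : g ∈ closure Cᶜ := by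
          have hgnΩ : g ∉ Ω₁ := by
            rw [hΓ, hopen.frontier_eq] at hg
            exact hg.2
          have hgnint : g ∉ interior C := fun h => hgnΩ (hIntC h)
          have hgf : g ∈ frontier C := ⟨subset_closure (hΓC hg), hgnint⟩
          rw [← frontier_compl] at hgf
          exact hgf.1
        obtain ⟨w, hw, hdw⟩ := Metric.mem_closure_iff.1 hgC (ε / 4) (by linarith)
        obtain ⟨p, hp, hproj⟩ := exists_norm_eq_iInf_of_complete_convex hCne
          hCclosed.isComplete hCconv w
        have hinner : ∀ c ∈ C, ⟪w - p, c - p⟫ ≤ 0 :=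
          (norm_eq_iInf_iff_real_inner_le_zero hCconv hp).1 hproj
        have hwp : w - p ≠ 0 := sub_ne_zero.2 fun h => hw (h ▸ hp)
        have hwpn : (0:ℝ) < ‖w - p‖ := norm_pos_iff.2 hwp
        set u := ‖w - p‖⁻¹ • (w - p) with hu'
        have hun : ‖u‖ = 1 := by
          rw [hu', norm_smul, norm_inv, norm_norm, inv_mul_cancel₀ (ne_of_gt hwpn)]
        refine ⟨u, hun, ?_⟩
        have hSup : S u ≤ ⟪u, p⟫ := by
          apply csSup_le (hCne.image _)
          rintro _ ⟨c, hc, rfl⟩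
          have h0 : ⟪u, c - p⟫ ≤ 0 := by
            rw [hu', real_inner_smul_left]
            exact mul_nonpos_of_nonneg_of_nonpos (by positivity) (hinner c hc)
          rw [inner_sub_right] at h0
          linarith
        have hupw : ⟪u, p - w⟫ = -‖w - p‖ := by
          rw [hu', real_inner_smul_left, show p - w = -(w - p) by abel, inner_neg_right,
            real_inner_self_eq_norm_sq]
          field_simp
        have huwz : ⟪u, w - z⟫ ≤ dist z w := by
          calc ⟪u, w - z⟫ ≤ ‖u‖ * ‖w - z‖ := real_inner_le_norm _ _
            _ = dist z w := by rw [hun, one_mul, dist_eq_norm, norm_sub_rev]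
        have hsplit : ⟪u, p⟫ - ⟪u, z⟫ = ⟪u, p - w⟫ + ⟪u, w - z⟫ := by
          rw [← inner_add_right, show p - w + (w - z) = p - z by abel, inner_sub_right]
        have hdzw : dist z w ≤ Metric.infDist z Γ + ε / 2 := by
          calc dist z w ≤ dist z g + dist g w := dist_triangle z g w
            _ ≤ Metric.infDist z Γ + ε / 2 := by linarith
        have hmain : S u - ⟪u, z⟫ ≤ Metric.infDist z Γ + ε := by
          have : ⟪u, p⟫ - ⟪u, z⟫ ≤ dist z w - ‖w - p‖ := by
            rw [hsplit, hupw]; linarith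
          linarith
        by_cases hz : z ∈ Ω₁
        · rw [sdf, if_pos hz]; linarith
        · rw [sdf, if_neg hz]
          have hzf : z ∈ Γ := by
            rw [hΓ, hopen.frontier_eq]
            exact ⟨hzC, hz⟩
          have h0 : Metric.infDist z Γ = 0 := Metric.infDist_zero_of_mem hzf
          rw [h0] at hmain ⊢
          linarith
      · -- z outside the closed convex hull : project it
        obtain ⟨p, hp, hproj⟩ := exists_norm_eq_iInf_of_complete_convex hCne
          hCclosed.isComplete hCconv z
        have hinner : ∀ c ∈ C, ⟪z - p, c - p⟫ ≤ 0 :=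
          (norm_eq_iInf_iff_real_inner_le_zero hCconv hp).1 hproj
        have hzp : z - p ≠ 0 := sub_ne_zero.2 fun h => hzC (h ▸ hp)
        have hzpn : (0:ℝ) < ‖z - p‖ := norm_pos_iff.2 hzp
        set u := ‖z - p‖⁻¹ • (z - p) with hu'
        have hun : ‖u‖ = 1 := by
          rw [hu', norm_smul, norm_inv, norm_norm, inv_mul_cancel₀ (ne_of_gt hzpn)]
        refine ⟨u, hun, ?_⟩
        have hSup : S u ≤ ⟪u, p⟫ := by
          apply csSup_le (hCne.image _)
          rintro _ ⟨c, hc, rfl⟩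
          have h0 : ⟪u, c - p⟫ ≤ 0 := by
            rw [hu', real_inner_smul_left]
            exact mul_nonpos_of_nonneg_of_nonpos (by positivity) (hinner c hc)
          rw [inner_sub_right] at h0
          linarith
        have hmin : ∀ c ∈ C, ‖z - p‖ ≤ ‖z - c‖ := by
          intro c hc
          rw [hproj]
          haveI : Nonempty C := hCne.to_subtype
          exact ciInf_le ⟨0, Set.forall_mem_range.2 fun _ => norm_nonneg _⟩ (⟨c, hc⟩ : C)
        have hpΓ : p ∈ Γ := by
          rw [hΓ, hopen.frontier_eq]
          refine ⟨hp, fun hpΩ => ?_⟩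
          obtain ⟨δ, hδ, hball⟩ := Metric.isOpen_iff.1 hopen p hpΩ
          set t : ℝ := min (1/2) (δ / (2 * ‖z - p‖)) with ht
          have htpos : 0 < t := by
            apply lt_min (by norm_num)
            positivity
          have htle : t ≤ 1/2 := min_le_left _ _
          set q := p + t • (z - p) with hq
          have hqΩ : q ∈ Ω₁ := by
            apply hball
            rw [Metric.mem_ball, dist_eq_norm, hq]
            have : p + t • (z - p) - p = t • (z - p) := by abel
            rw [this, norm_smul, Real.norm_eq_abs, abs_of_pos htpos]
            have h1 : t ≤ δ / (2 * ‖z - p‖) := min_le_right _ _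
            have h2 : t * ‖z - p‖ ≤ δ / 2 := by
              have he : (δ / (2 * ‖z - p‖)) * ‖z - p‖ = δ / 2 := by
                field_simp
              nlinarith
            linarith
          have hzq : ‖z - q‖ = (1 - t) * ‖z - p‖ := by
            have : z - q = (1 - t) • (z - p) := by
              rw [hq, sub_smul, one_smul]; abel
            rw [this, norm_smul, Real.norm_eq_abs, abs_of_pos (by linarith)]
          have := hmin q (hΩC hqΩ)
          rw [hzq] at this
          nlinarith
        rw [sdf, if_neg fun h => hzC (hΩC h)]
        have h1 : Metric.infDist z Γ ≤ ‖z - p‖ := by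
          have := Metric.infDist_le_dist_of_mem (x := z) hpΓ
          rwa [dist_eq_norm] at this
        have h2 : ⟪u, z - p⟫ = ‖z - p‖ := by
          rw [hu', real_inner_smul_left, real_inner_self_eq_norm_sq]
          field_simp
        rw [inner_sub_right] at h2
        linarith
    -- conclude convexity from the two bounds
    refine ⟨convex_univ, ?_⟩
    intro x _ y _ a b ha hb hab
    by_contra hcon
    push_neg at hcon
    set ε : ℝ := (sdf Ω₁ (a • x + b • y) - (a * sdf Ω₁ x + b * sdf Ω₁ y)) / 2 with hε
    have hεpos : 0 < ε := by simp only [hε, smul_eq_mul] at *; linarith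
    obtain ⟨u, hun, hup⟩ := upper (a • x + b • y) ε hεpos
    have l1 := lower u hun x
    have l2 := lower u hun y
    have hin : ⟪u, a • x + b • y⟫ = a * ⟪u, x⟫ + b * ⟪u, y⟫ := by
      rw [inner_add_right, real_inner_smul_right, real_inner_smul_right]
    rw [hin] at hup
    have hl1 : a * (⟪u, x⟫ - S u) ≤ a * sdf Ω₁ x := by nlinarith
    have hl2 : b * (⟪u, y⟫ - S u) ≤ b * sdf Ω₁ y := by nlinarith
    have hsum : a * ⟪u, x⟫ + b * ⟪u, y⟫ - S u
        = a * (⟪u, x⟫ - S u) + b * (⟪u, y⟫ - S u) := by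
      have : a * S u + b * S u = S u := by rw [← add_mul, hab, one_mul]
      linarith [this]
    simp only [smul_eq_mul] at hcon
    nlinarith
  · -- easy direction : Ω₁ is a sublevel set of the convex function sdf
    intro hφ
    have hset : Ω₁ = {x ∈ (Set.univ : Set (EuclideanSpace ℝ (Fin d))) | sdf Ω₁ x < 0} := by
      ext x
      simp only [Set.mem_setOf_eq, Set.mem_univ, true_and]
      constructor
      · intro hx
        have hxn : x ∉ frontier Ω₁ := by
          rw [hopen.frontier_eq]
          exact fun hf => hf.2 hx
        rw [sdf, if_pos hx, neg_lt, neg_zero]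
        exact (hΓclosed.notMem_iff_infDist_pos hΓne).1 hxn
      · intro hx
        by_contra hxo
        rw [sdf, if_neg hxo] at hx
        exact absurd hx (not_lt.2 Metric.infDist_nonneg)
    rw [hset]
    exact hφ.convex_lt 0
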